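/- Let Γ be a (q+1)-regular graph with adjacency second normalized eigenvalue λ, S a set indexing edge-labels, and B ⊆ 𝔽₂^S a linear code of rate r(B) > 1/2 and normalized distance δ(B) > λ. Then the Tanner/Cayley code C(G,S,B) on the edges of Cay(G,S) has rate at least 2r(B) − 1 > 0 and normalized distance at least ((δ(B) − λ)/(1 − λ))², hence is a good code when these are bounded below by constants. -/

import Mathlib

/-- Hamming weight of a `𝔽₂`-vector indexed by a finite type. -/
def wtF {α : Type*} [Fintype α] (c : α → ZMod 2) : ℕ :=
  (Finset.univ.filter fun i => c i ≠ 0).card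

set_option maxHeartbeats 2000000 in
/-- Tanner/Cayley-code theorem: let `Cay(G,S)` be the `(q+1)`-regular Cayley
graph of `G` w.r.t. a symmetric generating set `S` of size `q+1`, with second
normalized adjacency eigenvalue `λ` (encoded via the spectral bound on
mean-zero functions). Let `B ⊆ 𝔽₂^S` be a linear code of rate `> 1/2` and
normalized distance `δ > λ`. Then the code `C(G,S,B)` of edge-labelings
whose local view at every vertex lies in `B` has rate at least `2r(B) − 1`
and normalized distance at least `((δ − λ)/(1 − λ))²`; in particular it is a
good code when these quantities are bounded below by constants. -/
theorem stmt18 (q : ℕ) (G : Type*) [Group G] [Fintype G] [DecidableEq G]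
    (S : Finset G) (hScard : S.card = q + 1)
    (hsym : ∀ s ∈ S, s⁻¹ ∈ S)
    (hgen : Subgroup.closure (S : Set G) = ⊤)
    (lam : ℝ) (hlam0 : 0 ≤ lam) (hlam1 : lam < 1)
    (hspec : ∀ f : G → ℝ, (∑ g : G, f g = 0) →
      ∑ g : G, ∑ s ∈ S, f g * f (g * s) ≤ lam * (q + 1) * ∑ g : G, f g ^ 2)
    (B : Submodule (ZMod 2) (↥S → ZMod 2))
    (hrate : 2 * Module.finrank (ZMod 2) B > q + 1)
    (δ : ℝ) (hδlam : lam < δ)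
    (hδ : ∀ b : ↥S → ZMod 2, b ∈ B → b ≠ 0 → δ ≤ (wtF b : ℝ) / (q + 1))
    (Ccode : Submodule (ZMod 2) (G × ↥S → ZMod 2))
    (hCcode : ∀ c : G × ↥S → ZMod 2, c ∈ Ccode ↔
      ((∀ (g : G) (s : ↥S), c (g * s, ⟨(s : G)⁻¹, hsym s s.2⟩) = c (g, s)) ∧
        ∀ g : G, (fun s : ↥S => c (g, s)) ∈ B)) :
    (Module.finrank (ZMod 2) Ccode : ℝ) / (Fintype.card G * (q + 1) / 2) ≥
        2 * (Module.finrank (ZMod 2) B : ℝ) / (q + 1) - 1 ∧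
    ∀ c ∈ Ccode, c ≠ 0 →
      (wtF c : ℝ) / (Fintype.card G * (q + 1)) ≥ ((δ - lam) / (1 - lam)) ^ 2 := by
  classical
  have hn0 : 0 < Fintype.card G := Fintype.card_pos
  have hn0' : (0:ℝ) < (Fintype.card G : ℝ) := by exact_mod_cast hn0
  have hQ : (0:ℝ) < (q:ℝ) + 1 := by positivity
  have hratekey : 2 * (Fintype.card G * Module.finrank (ZMod 2) B) ≤
      2 * Module.finrank (ZMod 2) Ccode + Fintype.card G * (q+1) := by
    set τ : G × ↥S → G × ↥S := fun p => (p.1 * ↑p.2, ⟨(↑p.2)⁻¹, hsym _ p.2.2⟩) with hτdef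
    have hττ : ∀ p, τ (τ p) = p := by
      rintro ⟨g, s⟩
      simp only [hτdef]
      refine Prod.ext ?_ (Subtype.ext ?_)
      · simp [mul_assoc]
      · simp
    set L : (G × ↥S → ZMod 2) →ₗ[ZMod 2] (G × ↥S → ZMod 2) :=
      { toFun := fun c => fun p => c p + c (τ p)
        map_add' := by intro c d; funext p; simp [Pi.add_apply]; ring
        map_smul' := by intro r c; funext p; simp [Pi.smul_apply, smul_eq_mul]; ring } with hLdef
    set Sym := LinearMap.ker L with hSymdef
    have hrange : LinearMap.range L ≤ Sym := by
      rintro _ ⟨c, rfl⟩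
      have h2 : ∀ a b : ZMod 2, (a + b) + (b + a) = 0 := by decide
      simp only [hSymdef, LinearMap.mem_ker]
      funext p
      simp only [hLdef, LinearMap.coe_mk, AddHom.coe_mk, Pi.zero_apply]
      rw [hττ]
      exact h2 _ _
    have hV : Module.finrank (ZMod 2) (G × ↥S → ZMod 2) = Fintype.card G * (q+1) := by
      rw [Module.finrank_fintype_fun_eq_card, Fintype.card_prod, Fintype.card_coe, hScard]
    have hSym2 : Fintype.card G * (q+1) ≤ 2 * Module.finrank (ZMod 2) Sym := by
      have h1 := LinearMap.finrank_range_add_finrank_ker L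
      have h2 : Module.finrank (ZMod 2) (LinearMap.range L) ≤ Module.finrank (ZMod 2) Sym :=
        Submodule.finrank_mono hrange
      rw [hV, ← hSymdef] at h1
      omega
    -- the local-constraints submodule
    set Loc : Submodule (ZMod 2) (G × ↥S → ZMod 2) :=
      { carrier := {c | ∀ g : G, (fun s : ↥S => c (g, s)) ∈ B}
        add_mem' := fun hc hd g => B.add_mem (hc g) (hd g)
        zero_mem' := fun g => B.zero_mem
        smul_mem' := fun r c hc g => B.smul_mem r (hc g) } with hLocdef
    have hLocrank : Module.finrank (ZMod 2) Loc = Fintype.card G * Module.finrank (ZMod 2) B := by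
      have e : Loc ≃ₗ[ZMod 2] (G → B) :=
        { toFun := fun c g => ⟨fun s => c.1 (g, s), c.2 g⟩
          invFun := fun F => ⟨fun p => (F p.1).1 p.2, fun g => (F g).2⟩
          left_inv := by rintro ⟨c, hc⟩; ext ⟨g, s⟩; rfl
          right_inv := by intro F; funext g; rfl
          map_add' := by intro c d; funext g; rfl
          map_smul' := by intro r c; funext g; rfl }
      rw [e.finrank_eq, Module.finrank_pi_fintype, Finset.sum_const, Finset.card_univ,
        smul_eq_mul]
    have hEq : Ccode = Sym ⊓ Loc := by
      ext c
      rw [hCcode, Submodule.mem_inf]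
      constructor
      · rintro ⟨h1, h2⟩
        refine ⟨?_, h2⟩
        simp only [hSymdef, LinearMap.mem_ker]
        funext ⟨g, s⟩
        simp only [hLdef, LinearMap.coe_mk, AddHom.coe_mk, Pi.zero_apply, hτdef]
        rw [h1 g s]
        exact CharTwo.add_self_eq_zero _
      · rintro ⟨h1, h2⟩
        refine ⟨?_, h2⟩
        intro g s
        simp only [hSymdef, LinearMap.mem_ker] at h1
        have := congrFun h1 (g, s)
        simp only [hLdef, LinearMap.coe_mk, AddHom.coe_mk, Pi.zero_apply, hτdef] at this
        have h3 : ∀ a b : ZMod 2, a + b = 0 → b = a := by decide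
        exact h3 _ _ this
    have hsup := Submodule.finrank_sup_add_finrank_inf_eq Sym Loc
    have hle : Module.finrank (ZMod 2) (Sym ⊔ Loc : Submodule (ZMod 2) _) ≤
        Fintype.card G * (q+1) := hV ▸ Submodule.finrank_le _
    rw [← hEq] at hsup
    omega
  constructor
  · have hb : (2:ℝ) * ((Fintype.card G : ℝ) * (Module.finrank (ZMod 2) B : ℝ)) ≤
        2 * (Module.finrank (ZMod 2) Ccode : ℝ) + (Fintype.card G : ℝ) * ((q:ℝ)+1) := by
      exact_mod_cast hratekey
    rw [ge_iff_le, show (2*(Module.finrank (ZMod 2) B : ℝ)/((q:ℝ)+1) - 1)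
        = (2*(Module.finrank (ZMod 2) B : ℝ) - ((q:ℝ)+1))/((q:ℝ)+1) from by
          rw [sub_div, div_self (ne_of_gt hQ)],
      div_le_div_iff₀ hQ (by positivity)]
    linarith [mul_le_mul_of_nonneg_right hb (le_of_lt hQ)]
  intro c hc hc0
  set n := Fintype.card G with hndef
  have hn0 : 0 < n := Fintype.card_pos
  have hn0' : (0:ℝ) < n := by exact_mod_cast hn0
  have hQ : (0:ℝ) < (q:ℝ) + 1 := by positivity
  have h1lam : (0:ℝ) < 1 - lam := by linarith
  obtain ⟨hcsym, hcloc⟩ := (hCcode c).1 hc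
  -- the set of "active" vertices
  set Y : Finset G := Finset.univ.filter (fun g => ∃ s : ↥S, c (g, s) ≠ 0) with hYdef
  have hmemY : ∀ g : G, g ∈ Y ↔ ∃ s : ↥S, c (g, s) ≠ 0 := by intro g; simp [hYdef]
  set y := Y.card with hydef
  have hy0 : 0 < y := by
    have hex : ∃ p : G × ↥S, c p ≠ 0 := by
      by_contra h; push_neg at h; exact hc0 (funext h)
    obtain ⟨⟨g, s⟩, hp⟩ := hex
    exact Finset.card_pos.2 ⟨g, (hmemY g).2 ⟨s, hp⟩⟩
  have hy0' : (0:ℝ) < y := by exact_mod_cast hy0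
  have hyn : y ≤ n := Finset.card_le_univ Y
  -- indicator function
  set χ : G → ℝ := fun g => if g ∈ Y then 1 else 0 with hχdef
  have hχsum : ∑ g : G, χ g = (y:ℝ) := by
    simp only [hχdef]
    rw [Finset.sum_boole]
    simp [hydef]
  have hχshift : ∀ s : ↥S, ∑ g : G, χ (g * (s:G)) = (y:ℝ) := by
    intro s
    rw [← hχsum]
    exact Fintype.sum_equiv (Equiv.mulRight (s:G)) _ _ (fun g => rfl)
  -- number of directed "internal" pairs
  obtain ⟨E, hEdef⟩ : ∃ E : ℕ,
      E = (Finset.univ.filter fun p : G × ↥S => p.1 ∈ Y ∧ p.1 * (p.2:G) ∈ Y).card := ⟨_, rfl⟩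
  have hEeq : ∑ g : G, ∑ s : ↥S, χ g * χ (g * (s:G)) = (E : ℝ) := by
    have h1 : ∀ (g : G) (s : ↥S), χ g * χ (g * (s:G))
        = if (g ∈ Y ∧ g * (s:G) ∈ Y) then (1:ℝ) else 0 := by
      intro g s; simp only [hχdef]
      by_cases h1 : g ∈ Y <;> by_cases h2 : g * (s:G) ∈ Y <;> simp [h1, h2]
    simp_rw [h1]
    rw [hEdef, ← Finset.sum_boole (p := fun p : G × ↥S => p.1 ∈ Y ∧ p.1 * (p.2:G) ∈ Y),
      Fintype.sum_prod_type]
  have hwtE : wtF c ≤ E := by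
    rw [hEdef]
    unfold wtF
    apply Finset.card_le_card
    rintro ⟨g, s⟩ hp
    simp only [Finset.mem_filter, Finset.mem_univ, true_and] at hp ⊢
    refine ⟨(hmemY g).2 ⟨s, hp⟩, (hmemY _).2 ⟨⟨(s:G)⁻¹, hsym _ s.2⟩, ?_⟩⟩
    rw [hcsym g s]; exact hp
  -- weight decomposes over vertices, lower bound
  have hwtsplit : wtF c = ∑ g : G, wtF (fun s : ↥S => c (g, s)) := by
    rw [wtF, Finset.card_filter, Fintype.sum_prod_type]
    refine Finset.sum_congr rfl fun g _ => ?_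
    rw [wtF, Finset.card_filter]
  have hlow : δ * ((q:ℝ)+1) * y ≤ (wtF c : ℝ) := by
    have hterm : ∀ g : G, (if g ∈ Y then δ * ((q:ℝ)+1) else 0)
        ≤ (wtF (fun s : ↥S => c (g, s)) : ℝ) := by
      intro g
      split_ifs with hg
      · obtain ⟨s, hs⟩ := (hmemY g).1 hg
        have hb0 : (fun s : ↥S => c (g, s)) ≠ 0 := fun h => hs (congrFun h s)
        have h2 := hδ _ (hcloc g) hb0
        calc δ * ((q:ℝ)+1) ≤ ((wtF fun s : ↥S => c (g, s) : ℕ) : ℝ) / ((q:ℝ)+1) * ((q:ℝ)+1) := by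
              exact mul_le_mul_of_nonneg_right h2 (le_of_lt hQ)
          _ = _ := by field_simp
      · positivity
    calc δ * ((q:ℝ)+1) * y = ∑ g : G, (if g ∈ Y then δ * ((q:ℝ)+1) else 0) := by
          rw [Finset.sum_ite_mem, Finset.univ_inter, Finset.sum_const, nsmul_eq_mul]; ring
      _ ≤ ∑ g : G, (wtF (fun s : ↥S => c (g, s)) : ℝ) :=
          Finset.sum_le_sum fun g _ => hterm g
      _ = (wtF c : ℝ) := by rw [hwtsplit]; push_cast; ring
  -- attach-sum conversion
  have hatt : ∀ (F : G → ℝ), ∑ s : ↥S, F (s:G) = ∑ s ∈ S, F s := by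
    intro F; rw [Finset.univ_eq_attach]; exact Finset.sum_attach S F
  -- the spectral test function
  set f : G → ℝ := fun g => (n:ℝ) * χ g - (y:ℝ) with hfdef
  have hf0 : ∑ g : G, f g = 0 := by
    simp only [hfdef]
    rw [Finset.sum_sub_distrib, ← Finset.mul_sum, hχsum, Finset.sum_const,
      Finset.card_univ, nsmul_eq_mul, ← hndef]
    ring
  set A : G → ℝ := fun g => ∑ s : ↥S, χ (g * (s:G)) with hAdef
  have hcardS : (Fintype.card ↥S : ℝ) = (q:ℝ) + 1 := by
    rw [Fintype.card_coe, hScard]; push_cast; ring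
  have hsumA : ∑ g : G, A g = ((q:ℝ)+1) * y := by
    simp only [hAdef]
    rw [Finset.sum_comm]
    simp_rw [hχshift]
    rw [Finset.sum_const, Finset.card_univ, nsmul_eq_mul, hcardS]
  have hsumχA : ∑ g : G, χ g * A g = (E:ℝ) := by
    simp only [hAdef, Finset.mul_sum]
    exact hEeq
  have hinner : ∀ g : G, ∑ s ∈ S, f g * f (g * s)
      = f g * ((n:ℝ) * A g - ((q:ℝ)+1) * (y:ℝ)) := by
    intro g
    rw [← Finset.mul_sum]
    congr 1
    rw [← hatt (fun x => f (g * x))]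
    simp only [hfdef, hAdef]
    rw [Finset.sum_sub_distrib, ← Finset.mul_sum, Finset.sum_const,
      Finset.card_univ, nsmul_eq_mul, hcardS]
  have hfL : ∑ g : G, ∑ s ∈ S, f g * f (g * s)
      = (n:ℝ)^2 * (E:ℝ) - (n:ℝ)*((q:ℝ)+1)*(y:ℝ)^2 := by
    simp_rw [hinner]
    have hs1 : ∑ g : G, f g * ((n:ℝ) * A g - ((q:ℝ)+1) * (y:ℝ))
        = (n:ℝ) * (∑ g : G, f g * A g) - ((q:ℝ)+1) * (y:ℝ) * (∑ g : G, f g) := by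
      rw [Finset.mul_sum, Finset.mul_sum, ← Finset.sum_sub_distrib]
      exact Finset.sum_congr rfl fun g _ => by ring
    rw [hs1, hf0, mul_zero, sub_zero]
    have hfA : ∑ g : G, f g * A g
        = (n:ℝ) * (E:ℝ) - (y:ℝ) * (((q:ℝ)+1) * (y:ℝ)) := by
      have hs2 : ∑ g : G, f g * A g
          = (n:ℝ) * (∑ g : G, χ g * A g) - (y:ℝ) * (∑ g : G, A g) := by
        rw [Finset.mul_sum, Finset.mul_sum, ← Finset.sum_sub_distrib]
        exact Finset.sum_congr rfl fun g _ => by simp only [hfdef]; ring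
      rw [hs2, hsumχA, hsumA]
    rw [hfA]; ring
  have hχsq : ∀ g, χ g ^ 2 = χ g := by
    intro g; simp only [hχdef]; split_ifs <;> ring
  have hfR : ∑ g : G, f g ^ 2 = (n:ℝ) * (y:ℝ) * ((n:ℝ) - (y:ℝ)) := by
    have hterm : ∀ g : G, f g ^ 2
        = (n:ℝ)^2 * χ g - 2*(n:ℝ)*(y:ℝ) * χ g + (y:ℝ)^2 := by
      intro g
      simp only [hfdef]
      linear_combination ((n:ℝ))^2 * hχsq g
    simp_rw [hterm]
    rw [Finset.sum_add_distrib, Finset.sum_sub_distrib, ← Finset.mul_sum, ← Finset.mul_sum,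
      hχsum, Finset.sum_const, Finset.card_univ, nsmul_eq_mul, ← hndef]
    ring
  have hmix := hspec f hf0
  rw [hfL, hfR] at hmix
  -- δ ≤ 1
  have hδ1 : δ ≤ 1 := by
    have hBne : B ≠ ⊥ := by
      intro h
      rw [h, finrank_bot] at hrate
      omega
    obtain ⟨b, hbB, hb0⟩ := Submodule.exists_mem_ne_zero_of_ne_bot hBne
    have h1 := hδ b hbB hb0
    have h2 : (wtF b : ℝ) ≤ (q:ℝ) + 1 := by
      have : wtF b ≤ q + 1 := by
        rw [← hScard, ← Fintype.card_coe]
        exact le_trans (Finset.card_filter_le _ _) (le_of_eq (Finset.card_univ))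
      exact_mod_cast this
    calc δ ≤ (wtF b : ℝ) / ((q:ℝ)+1) := h1
      _ ≤ 1 := by rw [div_le_one hQ]; exact h2
  -- derive y ≥ β n
  set β := (δ - lam) / (1 - lam) with hβdef
  have hβ0 : 0 ≤ β := div_nonneg (by linarith) (by linarith)
  have hβδ : β ≤ δ := by
    rw [hβdef, div_le_iff₀ h1lam]
    have h7 : lam * δ ≤ lam * 1 := mul_le_mul_of_nonneg_left hδ1 hlam0
    linarith [h7]
  have hEW : (wtF c : ℝ) ≤ (E:ℝ) := Nat.cast_le.mpr hwtE
  have hQy : (0:ℝ) < ((q:ℝ)+1) * (y:ℝ) := mul_pos hQ hy0'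
  have hyβ : β * n ≤ y := by
    have h3 : (n:ℝ) * (δ * (((q:ℝ)+1) * y) * n)
        ≤ (n:ℝ) * ((((q:ℝ)+1) * y) * ((y:ℝ) + lam * ((n:ℝ) - y))) := by
      have m1 := mul_le_mul_of_nonneg_left hlow (sq_nonneg (n:ℝ))
      have m2 := mul_le_mul_of_nonneg_left hEW (sq_nonneg (n:ℝ))
      linarith [hmix]
    have h4 := le_of_mul_le_mul_left h3 hn0'
    have h5 : (((q:ℝ)+1) * y) * (δ * n) ≤ (((q:ℝ)+1) * y) * ((y:ℝ) + lam * ((n:ℝ) - y)) := by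
      linarith [h4]
    have h6 := le_of_mul_le_mul_left h5 hQy
    rw [hβdef, div_mul_eq_mul_div, div_le_iff₀ h1lam]
    linarith [h6]
  -- conclude
  rw [ge_iff_le, le_div_iff₀ (by exact mul_pos hn0' hQ)]
  have m1 : β * (((q:ℝ)+1)) * (β * n) ≤ β * (((q:ℝ)+1)) * y :=
    mul_le_mul_of_nonneg_left hyβ (by positivity)
  have m2 : β * (((q:ℝ)+1) * y) ≤ δ * (((q:ℝ)+1) * y) :=
    mul_le_mul_of_nonneg_right hβδ (le_of_lt hQy)
  linarith [hlow, m1, m2]
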